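/- Let U(5) act on ℂ⁵ by ρ(g)w := det(g)·(ḡ w), where ḡ is the entrywise complex conjugate of g. Then (i) the subspace of w ∈ ℂ⁵ with ρ(h)w = w for every h = diag(A, B, c) with A, B ∈ SU(2) and |c| = 1 equals the one-dimensional span ℂ·e₅; and (ii) for the matrix g ∈ U(5) determined by ge₁ = e₃, ge₂ = −e₄, ge₃ = e₁, ge₄ = e₂, ge₅ = e₅ one has ρ(g)e₅ = −e₅; consequently no nonzero vector of ℂ⁵ is fixed by ρ on both h as above and g. -/

import Mathlib

/-!
STATEMENT 9: For the U(5)-representation ρ(g)w := det(g)·(ḡw) on ℂ⁵, the vectors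
fixed by all h = diag(A,B,c) with A,B ∈ SU(2), |c| = 1 form the line ℂ·e₅;
the ℤ₄-generator g sends e₅ to −e₅, so no nonzero vector is fixed by both.
-/

noncomputable section

abbrev Mat2 : Type := Matrix (Fin 2) (Fin 2) ℂ

/-- The special unitary group SU(2), as a set of matrices. -/
def SU2 : Set Mat2 := {A | A * A.conjTranspose = 1 ∧ A.det = 1}

/-- The block-diagonal matrix diag(A, B, c) ∈ U(5). -/
def bd5 (A B : Mat2) (c : ℂ) : Matrix (Fin 5) (Fin 5) ℂ :=
  !![A 0 0, A 0 1, 0, 0, 0;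
     A 1 0, A 1 1, 0, 0, 0;
     0, 0, B 0 0, B 0 1, 0;
     0, 0, B 1 0, B 1 1, 0;
     0, 0, 0, 0, c]

/-- The ℤ₄-generator g ∈ U(5): ge₁ = e₃, ge₂ = −e₄, ge₃ = e₁, ge₄ = e₂, ge₅ = e₅. -/
def g5 : Matrix (Fin 5) (Fin 5) ℂ :=
  !![0, 0, 1, 0, 0;
     0, 0, 0, 1, 0;
     1, 0, 0, 0, 0;
     0, -1, 0, 0, 0;
     0, 0, 0, 0, 1]

/-- The representation ρ(g)w := det(g)·(ḡw) of U(5) on ℂ⁵. -/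
def rho9 (g : Matrix (Fin 5) (Fin 5) ℂ) (w : Fin 5 → ℂ) : Fin 5 → ℂ :=
  g.det • (g.map (starRingEnd ℂ)).mulVec w

/-- The standard basis of ℂ⁵ (e₅ = eV 4). -/
def eV (i : Fin 5) : Fin 5 → ℂ := Pi.single i 1

lemma det_bd5 (A B : Mat2) (c : ℂ) : (bd5 A B c).det = A.det * B.det * c := by
  simp [bd5, Matrix.det_succ_row_zero, Fin.sum_univ_succ, Matrix.det_fin_two,
    show ((1:Fin 5).succAbove 2) = 3 from rfl,
    show ((1:Fin 5).succAbove 3) = 4 from rfl]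
  ring

lemma one_SU2 : (1 : Mat2) ∈ SU2 := by
  constructor <;> simp [SU2]

lemma det_g5 : g5.det = -1 := by
  simp [g5, Matrix.det_succ_row_zero, Fin.sum_univ_succ,
    show ((2:Fin 5).succAbove (2:Fin 4)) = 3 from rfl, show ((2:Fin 5).succAbove (3:Fin 4)) = 4 from rfl,
    show ((2:Fin 4).succAbove (2:Fin 3)) = 3 from rfl, show ((3:Fin 4).succAbove (2:Fin 3)) = 2 from rfl]

lemma rho_g5_e : rho9 g5 (eV 4) = -eV 4 := by
  funext i
  simp only [rho9, det_g5]
  fin_cases i <;>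
    simp [g5, eV, Matrix.mulVec, dotProduct, Fin.sum_univ_succ, Pi.single_apply]

lemma rho9_smul (g : Matrix (Fin 5) (Fin 5) ℂ) (t : ℂ) (w : Fin 5 → ℂ) :
    rho9 g (t • w) = t • rho9 g w := by
  unfold rho9
  rw [Matrix.mulVec_smul, smul_comm]

theorem statement9 :
    ({w : Fin 5 → ℂ | ∀ (A B : Mat2) (c : ℂ), A ∈ SU2 → B ∈ SU2 → ‖c‖ = 1 →
        rho9 (bd5 A B c) w = w}
      = Set.range (fun t : ℂ => t • eV 4)) ∧
    rho9 g5 (eV 4) = -eV 4 ∧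
    ({w : Fin 5 → ℂ | (∀ (A B : Mat2) (c : ℂ), A ∈ SU2 → B ∈ SU2 → ‖c‖ = 1 →
        rho9 (bd5 A B c) w = w) ∧ rho9 g5 w = w}
      = {0}) := by
  have key : ∀ w : Fin 5 → ℂ,
      (∀ (A B : Mat2) (c : ℂ), A ∈ SU2 → B ∈ SU2 → ‖c‖ = 1 →
        rho9 (bd5 A B c) w = w) ↔ ∃ t : ℂ, t • eV 4 = w := by
    intro w
    constructor
    · intro h
      have h1 := h 1 1 (-1) one_SU2 one_SU2 (by simp)
      simp only [rho9, det_bd5, Matrix.det_one, one_mul, mul_neg, mul_one] at h1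
      have e : ∀ i : Fin 5, ((-1 : ℂ) • ((bd5 1 1 (-1)).map (starRingEnd ℂ)).mulVec w) i
          = w i := fun i => congrFun h1 i
      have e0 := e 0; have e1 := e 1; have e2 := e 2; have e3 := e 3
      simp [bd5, Matrix.mulVec, dotProduct, Fin.sum_univ_succ,
        Matrix.one_apply, show (Fin.succ 2 : Fin 5) = 3 from rfl] at e0 e1 e2 e3
      refine ⟨w 4, funext fun i => ?_⟩
      fin_cases i <;> simp [eV, Pi.single_apply]
      · linear_combination (1/2 : ℂ) * e0
      · linear_combination (1/2 : ℂ) * e1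
      · linear_combination (1/2 : ℂ) * e2
      · linear_combination (1/2 : ℂ) * e3
    · rintro ⟨t, rfl⟩ A B c hA hB hc
      have hcc : c * (starRingEnd ℂ) c = 1 := by
        have := Complex.mul_conj c
        rw [Complex.normSq_eq_norm_sq, hc] at this
        simpa using this
      funext i
      simp only [rho9, det_bd5, hA.2, hB.2, one_mul]
      fin_cases i <;>
        simp [bd5, Matrix.mulVec, dotProduct, Fin.sum_univ_succ, eV,
          Pi.single_apply]
      linear_combination t * hcc
  refine ⟨?_, rho_g5_e, ?_⟩
  · ext w
    simpa [Set.range] using key w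
  · ext w
    simp only [Set.mem_setOf_eq, Set.mem_singleton_iff]
    constructor
    · rintro ⟨h1, h2⟩
      obtain ⟨t, rfl⟩ := (key w).1 h1
      rw [rho9_smul, rho_g5_e] at h2
      have h4 := congrFun h2 4
      simp [eV, Pi.single_apply] at h4
      have ht : t = 0 := by linear_combination (-1/2 : ℂ) * h4
      simp [ht]
    · rintro rfl
      refine ⟨fun A B c _ _ _ => ?_, ?_⟩ <;> simp [rho9]

end
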